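/- Let α > 0, β > 0, γ > 0 and define h(t) = (γ/β)·((e^{β t^α} − 1)/(e^{γ t^α} − 1)) − 1 for t > 0. If β > γ then h is increasing on (0,∞), and if β < γ then h is decreasing on (0,∞). -/

import Mathlib

open Real Set

private lemma exp_sub_one_pos {u : ℝ} (hu : 0 < u) : 0 < Real.exp u - 1 := by
  have := Real.add_one_lt_exp (ne_of_gt hu)
  linarith

private lemma phi_strictMono :
    StrictMonoOn (fun u : ℝ => u * Real.exp u / (Real.exp u - 1)) (Set.Ioi 0) := by
  apply strictMonoOn_of_deriv_pos (convex_Ioi 0)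
  · apply ContinuousOn.div
    · exact (continuous_id.mul Real.continuous_exp).continuousOn
    · exact (Real.continuous_exp.sub continuous_const).continuousOn
    · intro u hu; exact ne_of_gt (exp_sub_one_pos hu)
  · rw [interior_Ioi]
    intro u hu
    have hu' : 0 < u := hu
    have hne : Real.exp u - 1 ≠ 0 := ne_of_gt (exp_sub_one_pos hu')
    have h1 : HasDerivAt (fun u : ℝ => u * Real.exp u)
        (1 * Real.exp u + u * Real.exp u) u :=
      (hasDerivAt_id u).mul (Real.hasDerivAt_exp u)
    have h2 : HasDerivAt (fun u : ℝ => Real.exp u - 1) (Real.exp u) u := by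
      simpa using (Real.hasDerivAt_exp u).sub_const 1
    have hd := h1.div h2 hne
    rw [show deriv (fun u : ℝ => u * Real.exp u / (Real.exp u - 1)) u = _ from hd.deriv]
    have hlt : u + 1 < Real.exp u := Real.add_one_lt_exp (ne_of_gt hu')
    have hpos : 0 < Real.exp u := Real.exp_pos u
    have hsq : 0 < (Real.exp u - 1) ^ 2 := by positivity
    apply div_pos _ hsq
    nlinarith [hpos, hlt]

private lemma key_ineq {b c x : ℝ} (hc : 0 < c) (hbc : c < b) (hx : 0 < x) :
    c * Real.exp (c * x) * (Real.exp (b * x) - 1)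
      < b * Real.exp (b * x) * (Real.exp (c * x) - 1) := by
  have hcx : 0 < c * x := mul_pos hc hx
  have hbx : 0 < b * x := mul_pos (hc.trans hbc) hx
  have hlt : c * x < b * x := by nlinarith
  have h := phi_strictMono (Set.mem_Ioi.mpr hcx) (Set.mem_Ioi.mpr hbx) hlt
  simp only at h
  have d1 : 0 < Real.exp (c * x) - 1 := exp_sub_one_pos hcx
  have d2 : 0 < Real.exp (b * x) - 1 := exp_sub_one_pos hbx
  rw [div_lt_div_iff₀ d1 d2] at h
  -- h : c*x*exp(c*x) * (exp(b*x)-1) < b*x*exp(b*x) * (exp(c*x)-1)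
  nlinarith [h, hx]

private lemma ratio_strictMono {b c : ℝ} (hc : 0 < c) (hbc : c < b) :
    StrictMonoOn (fun x : ℝ => (Real.exp (b * x) - 1) / (Real.exp (c * x) - 1))
      (Set.Ioi 0) := by
  apply strictMonoOn_of_deriv_pos (convex_Ioi 0)
  · apply ContinuousOn.div
    · exact ((Real.continuous_exp.comp (continuous_const.mul continuous_id)).sub
        continuous_const).continuousOn
    · exact ((Real.continuous_exp.comp (continuous_const.mul continuous_id)).sub
        continuous_const).continuousOn
    · intro x hx; exact ne_of_gt (exp_sub_one_pos (mul_pos hc hx))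
  · rw [interior_Ioi]
    intro x hx
    have hx' : 0 < x := hx
    have hne : Real.exp (c * x) - 1 ≠ 0 := ne_of_gt (exp_sub_one_pos (mul_pos hc hx'))
    have h1 : HasDerivAt (fun x : ℝ => Real.exp (b * x) - 1)
        (Real.exp (b * x) * b) x := by
      simpa using ((Real.hasDerivAt_exp (b * x)).comp x
        ((hasDerivAt_id x).const_mul b)).sub_const 1
    have h2 : HasDerivAt (fun x : ℝ => Real.exp (c * x) - 1)
        (Real.exp (c * x) * c) x := by
      simpa using ((Real.hasDerivAt_exp (c * x)).comp x
        ((hasDerivAt_id x).const_mul c)).sub_const 1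
    have hd := h1.div h2 hne
    rw [show deriv (fun x : ℝ => (Real.exp (b * x) - 1) / (Real.exp (c * x) - 1)) x = _ from hd.deriv]
    have hsq : 0 < (Real.exp (c * x) - 1) ^ 2 := by positivity
    apply div_pos _ hsq
    have := key_ineq hc hbc hx'
    nlinarith [this]

theorem stmt_9 (α β γ : ℝ) (hα : 0 < α) (hβ : 0 < β) (hγ : 0 < γ) :
    (β > γ → StrictMonoOn
        (fun t : ℝ =>
          (γ / β) * ((Real.exp (β * t ^ α) - 1) / (Real.exp (γ * t ^ α) - 1)) - 1)
        (Set.Ioi 0)) ∧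
    (β < γ → StrictAntiOn
        (fun t : ℝ =>
          (γ / β) * ((Real.exp (β * t ^ α) - 1) / (Real.exp (γ * t ^ α) - 1)) - 1)
        (Set.Ioi 0)) := by
  have hcoef : 0 < γ / β := div_pos hγ hβ
  constructor
  · intro hgt
    intro s hs t ht hst
    have hs' : (0:ℝ) < s := hs
    have ht' : (0:ℝ) < t := ht
    have hspow : 0 < s ^ α := Real.rpow_pos_of_pos hs' α
    have htpow : 0 < t ^ α := Real.rpow_pos_of_pos ht' α
    have hpowlt : s ^ α < t ^ α := Real.rpow_lt_rpow (le_of_lt hs') hst hα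
    have h := ratio_strictMono hγ hgt (Set.mem_Ioi.mpr hspow)
      (Set.mem_Ioi.mpr htpow) hpowlt
    simp only at h ⊢
    have := mul_lt_mul_of_pos_left h hcoef
    linarith
  · intro hlt
    intro s hs t ht hst
    have hs' : (0:ℝ) < s := hs
    have ht' : (0:ℝ) < t := ht
    have hspow : 0 < s ^ α := Real.rpow_pos_of_pos hs' α
    have htpow : 0 < t ^ α := Real.rpow_pos_of_pos ht' α
    have hpowlt : s ^ α < t ^ α := Real.rpow_lt_rpow (le_of_lt hs') hst hα
    have h := ratio_strictMono hβ hlt (Set.mem_Ioi.mpr hspow)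
      (Set.mem_Ioi.mpr htpow) hpowlt
    simp only at h
    -- h : (exp(γ s^α)-1)/(exp(β s^α)-1) < (exp(γ t^α)-1)/(exp(β t^α)-1)
    have ds : 0 < Real.exp (β * s ^ α) - 1 := exp_sub_one_pos (mul_pos hβ hspow)
    have dt : 0 < Real.exp (β * t ^ α) - 1 := exp_sub_one_pos (mul_pos hβ htpow)
    have ns : 0 < Real.exp (γ * s ^ α) - 1 := exp_sub_one_pos (mul_pos hγ hspow)
    have nt : 0 < Real.exp (γ * t ^ α) - 1 := exp_sub_one_pos (mul_pos hγ htpow)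
    rw [div_lt_div_iff₀ ds dt] at h
    have key : (Real.exp (β * t ^ α) - 1) / (Real.exp (γ * t ^ α) - 1)
        < (Real.exp (β * s ^ α) - 1) / (Real.exp (γ * s ^ α) - 1) := by
      rw [div_lt_div_iff₀ nt ns]
      nlinarith [h]
    simp only
    have := mul_lt_mul_of_pos_left key hcoef
    linarith
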